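/- Let S_1, S_2, S_3, S_4 be pairwise disjoint 2-spaces of F_q^4 with S_4 disjoint from the point set of the regulus R(S_1,S_2,S_3). Then the joint stabilizer U = Stab({S_1,S_2,S_3,S_4}) in PGL(4,q) acts regularly on the q+1 three-dimensional subspaces containing S_4. -/

import Mathlib

open Submodule Module

/-- A transversal line of three 2-spaces `S₁, S₂, S₃`: a 2-space meeting each `Sᵢ`
in a 1-dimensional subspace. -/
def IsTransversal {F V : Type*} [Field F] [AddCommGroup V] [Module F V]
    (S₁ S₂ S₃ L : Submodule F V) : Prop :=
  finrank F L = 2 ∧ finrank F ↥(L ⊓ S₁) = 1 ∧ finrank F ↥(L ⊓ S₂) = 1 ∧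
    finrank F ↥(L ⊓ S₃) = 1

/-- Membership in the regulus `R(S₁,S₂,S₃)`: a 2-space meeting every transversal line of
`S₁, S₂, S₃` in a point. -/
def InRegulus {F V : Type*} [Field F] [AddCommGroup V] [Module F V]
    (S₁ S₂ S₃ T : Submodule F V) : Prop :=
  finrank F T = 2 ∧ ∀ L, IsTransversal S₁ S₂ S₃ L → finrank F ↥(T ⊓ L) = 1


set_option maxHeartbeats 1000000
set_option synthInstance.maxHeartbeats 400000

section aux
variable {F : Type*} [Field F] {V : Type*} [AddCommGroup V] [Module F V]

private lemma aux_gen {W : Submodule F V} (h : finrank F ↥W = 1) :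
    ∃ x : V, x ∈ W ∧ x ≠ 0 ∧ W = span F {x} := by
  obtain ⟨v, hv0, hv⟩ := finrank_eq_one_iff'.mp h
  refine ⟨↑v, v.2, by simpa using hv0, le_antisymm ?_ ?_⟩
  · intro w hw
    obtain ⟨c, hc⟩ := hv ⟨w, hw⟩
    exact mem_span_singleton.mpr ⟨c, by simpa [Subtype.ext_iff] using hc⟩
  · exact span_le.mpr (by simpa using v.2)

private lemma aux_mapeq [FiniteDimensional F V] (k : V ≃ₗ[F] V) (S : Submodule F V)
    (h : S.map (k : V →ₗ[F] V) ≤ S) : S.map (k : V →ₗ[F] V) = S :=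
  Submodule.eq_of_le_of_finrank_le h (le_of_eq (LinearEquiv.finrank_map_eq k S).symm)

end aux

/-- Let `S₁, S₂, S₃, S₄` be pairwise disjoint 2-spaces of `F_q^4` such that `S₄` is
disjoint from the point set of the regulus `R(S₁,S₂,S₃)` (i.e. meets every member of the
regulus trivially). Then the joint stabilizer `U = Stab({S₁,S₂,S₃,S₄})` in `PGL(4,q)`
acts regularly on the `q+1` three-dimensional subspaces containing `S₄`: for any two
3-spaces `H, H'` through `S₄` there is an invertible linear map in the joint stabilizer
sending `H` to `H'`, unique as an element of `PGL(4,q)` (i.e. up to a scalar). -/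
theorem stmt18 (F : Type*) [Field F] [Fintype F]
    (S₁ S₂ S₃ S₄ : Submodule F (Fin 4 → F))
    (h₁ : finrank F S₁ = 2) (h₂ : finrank F S₂ = 2) (h₃ : finrank F S₃ = 2)
    (h₄ : finrank F S₄ = 2)
    (h12 : S₁ ⊓ S₂ = ⊥) (h13 : S₁ ⊓ S₃ = ⊥) (h14 : S₁ ⊓ S₄ = ⊥)
    (h23 : S₂ ⊓ S₃ = ⊥) (h24 : S₂ ⊓ S₄ = ⊥) (h34 : S₃ ⊓ S₄ = ⊥)
    (havoid : ∀ T : Submodule F (Fin 4 → F), InRegulus S₁ S₂ S₃ T → S₄ ⊓ T = ⊥) :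
    ∀ H H' : Submodule F (Fin 4 → F),
      finrank F H = 3 → finrank F H' = 3 → S₄ ≤ H → S₄ ≤ H' →
      (∃ g : (Fin 4 → F) ≃ₗ[F] (Fin 4 → F),
        (S₁.map (g : (Fin 4 → F) →ₗ[F] (Fin 4 → F)) = S₁ ∧
         S₂.map (g : (Fin 4 → F) →ₗ[F] (Fin 4 → F)) = S₂ ∧
         S₃.map (g : (Fin 4 → F) →ₗ[F] (Fin 4 → F)) = S₃ ∧
         S₄.map (g : (Fin 4 → F) →ₗ[F] (Fin 4 → F)) = S₄) ∧
        H.map (g : (Fin 4 → F) →ₗ[F] (Fin 4 → F)) = H') ∧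
      (∀ g g' : (Fin 4 → F) ≃ₗ[F] (Fin 4 → F),
        (S₁.map (g : (Fin 4 → F) →ₗ[F] (Fin 4 → F)) = S₁ ∧
         S₂.map (g : (Fin 4 → F) →ₗ[F] (Fin 4 → F)) = S₂ ∧
         S₃.map (g : (Fin 4 → F) →ₗ[F] (Fin 4 → F)) = S₃ ∧
         S₄.map (g : (Fin 4 → F) →ₗ[F] (Fin 4 → F)) = S₄) →
        H.map (g : (Fin 4 → F) →ₗ[F] (Fin 4 → F)) = H' →
        (S₁.map (g' : (Fin 4 → F) →ₗ[F] (Fin 4 → F)) = S₁ ∧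
         S₂.map (g' : (Fin 4 → F) →ₗ[F] (Fin 4 → F)) = S₂ ∧
         S₃.map (g' : (Fin 4 → F) →ₗ[F] (Fin 4 → F)) = S₃ ∧
         S₄.map (g' : (Fin 4 → F) →ₗ[F] (Fin 4 → F)) = S₄) →
        H.map (g' : (Fin 4 → F) →ₗ[F] (Fin 4 → F)) = H' →
        ∃ c : Fˣ, ∀ v, g' v = (c : F) • g v) := by
  intro H H' hH3 hH'3 hS4H hS4H'
  have hV4 : finrank F (Fin 4 → F) = 4 := by simp [Module.finrank_fintype_fun_eq_card]
  -- S₁ and S₂ are complementary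
  have hcompl : IsCompl S₁ S₂ := by
    refine ⟨disjoint_iff.mpr h12, codisjoint_iff.mpr ?_⟩
    apply Submodule.eq_top_of_finrank_eq
    rw [hV4]
    have := Submodule.finrank_sup_add_finrank_inf_eq S₁ S₂
    rw [h12, h₁, h₂] at this
    simpa using this
  -- projections
  obtain ⟨π₁, π₂, hπ₁l, hπ₁r, hπ₂l, hπ₂r, hdec⟩ :
      ∃ (π₁ : (Fin 4 → F) →ₗ[F] S₁) (π₂ : (Fin 4 → F) →ₗ[F] S₂),
        (∀ a : S₁, π₁ ↑a = a) ∧ (∀ v ∈ S₂, π₁ v = 0) ∧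
        (∀ b : S₂, π₂ ↑b = b) ∧ (∀ v ∈ S₁, π₂ v = 0) ∧
        (∀ v, (↑(π₁ v) + ↑(π₂ v) : Fin 4 → F) = v) := by
    refine ⟨S₁.linearProjOfIsCompl S₂ hcompl, S₂.linearProjOfIsCompl S₁ hcompl.symm,
      fun a => Submodule.linearProjOfIsCompl_apply_left hcompl a,
      fun v hv => Submodule.linearProjOfIsCompl_apply_right' hcompl hv,
      fun b => Submodule.linearProjOfIsCompl_apply_left hcompl.symm b,
      fun v hv => Submodule.linearProjOfIsCompl_apply_right' hcompl.symm hv,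
      fun v => Submodule.projection_add_projection_eq_self hcompl v⟩
  have hππ : ∀ (p : S₁) (q : S₂), π₁ (↑p + ↑q) = p ∧ π₂ (↑p + ↑q) = q := by
    intro p q
    constructor
    · rw [map_add, hπ₁l, hπ₁r ↑q q.2, add_zero]
    · rw [map_add, hπ₂l, hπ₂r ↑p p.2, zero_add]
  -- graph isomorphisms
  have hiso : ∀ (S : Submodule F (Fin 4 → F)), finrank F S = 2 → S₁ ⊓ S = ⊥ → S₂ ⊓ S = ⊥ →
      ∃ φ : S₁ ≃ₗ[F] S₂, ∀ v, v ∈ S ↔ ∃ a : S₁, v = ↑a + ↑(φ a) := by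
    intro S hS2 h1S h2S
    have hpinj : Function.Injective (π₁ ∘ₗ S.subtype) := by
      rw [← LinearMap.ker_eq_bot, LinearMap.ker_eq_bot']
      intro z hz
      have hz' : π₁ ↑z = 0 := hz
      have hmem : (↑z : Fin 4 → F) ∈ S₂ := by
        have := hdec ↑z
        rw [hz'] at this
        simp only [Submodule.coe_zero, zero_add] at this
        rw [← this]; exact (π₂ ↑z).2
      have : (↑z : Fin 4 → F) ∈ S₂ ⊓ S := ⟨hmem, z.2⟩
      rw [h2S] at this
      exact Subtype.ext (by simpa using this)
    have hpsurj : Function.Surjective (π₁ ∘ₗ S.subtype) :=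
      (LinearMap.injective_iff_surjective_of_finrank_eq_finrank (hS2.trans h₁.symm)).mp hpinj
    set e : S ≃ₗ[F] S₁ := LinearEquiv.ofBijective _ ⟨hpinj, hpsurj⟩ with he
    have hee : ∀ z : S, e z = π₁ ↑z := fun z => rfl
    set φ₀ : S₁ →ₗ[F] S₂ := π₂ ∘ₗ S.subtype ∘ₗ (e.symm : S₁ →ₗ[F] S) with hφ₀
    have hφ₀e : ∀ a : S₁, φ₀ a = π₂ ↑(e.symm a) := fun a => rfl
    have hkey : ∀ a : S₁, (↑a + ↑(φ₀ a) : Fin 4 → F) = ↑(e.symm a) := by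
      intro a
      have h1 : π₁ ↑(e.symm a) = a := by
        have := hee (e.symm a); rw [e.apply_symm_apply] at this; exact this.symm
      have h2 := hdec ↑(e.symm a)
      rw [h1] at h2
      rw [hφ₀e]
      exact h2
    have hφ₀inj : Function.Injective φ₀ := by
      rw [← LinearMap.ker_eq_bot, LinearMap.ker_eq_bot']
      intro a ha
      have : (↑a : Fin 4 → F) ∈ S₁ ⊓ S := by
        constructor
        · exact a.2
        · have := hkey a
          rw [ha] at this
          simp only [Submodule.coe_zero, add_zero] at this
          rw [this]; exact (e.symm a).2
      rw [h1S] at this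
      exact Subtype.ext (by simpa using this)
    have hφ₀surj : Function.Surjective φ₀ :=
      (LinearMap.injective_iff_surjective_of_finrank_eq_finrank (h₁.trans h₂.symm)).mp hφ₀inj
    refine ⟨LinearEquiv.ofBijective φ₀ ⟨hφ₀inj, hφ₀surj⟩, ?_⟩
    intro v
    constructor
    · intro hv
      exact ⟨e ⟨v, hv⟩, by show v = ↑(e ⟨v,hv⟩) + ↑(φ₀ (e ⟨v,hv⟩)); rw [
          hkey, e.symm_apply_apply]⟩
    · rintro ⟨a, rfl⟩
      show (↑a + ↑(φ₀ a) : Fin 4 → F) ∈ S; rw [hkey]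
      exact (e.symm a).2
  obtain ⟨φ, hφ⟩ := hiso S₃ h₃ h13 h23
  obtain ⟨ψ, hψ⟩ := hiso S₄ h₄ h14 h24
  obtain ⟨M, hφM⟩ : ∃ M : S₁ ≃ₗ[F] S₁, ∀ z, φ (M z) = ψ z :=
    ⟨ψ.trans φ.symm, fun z => by simp⟩
  -- M has no eigenvectors
  have heig : ∀ (x : S₁) (c : F), M x = c • x → x = 0 := by
    intro x c hMx
    by_contra hx0
    set fc : S₁ →ₗ[F] (Fin 4 → F) := S₁.subtype + c • (S₂.subtype ∘ₗ (φ : S₁ →ₗ[F] S₂))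
      with hfc
    have hfcap : ∀ z : S₁, fc z = ↑z + c • ↑(φ z) := by
      intro z; simp [hfc]
    have hπ₁fc : ∀ z : S₁, π₁ (fc z) = z := by
      intro z
      rw [hfcap, map_add, map_smul, hπ₁l, hπ₁r _ (φ z).2, smul_zero, add_zero]
    have hfcinj : Function.Injective fc := by
      rw [← LinearMap.ker_eq_bot, LinearMap.ker_eq_bot']
      intro z hz
      have h' := hπ₁fc z
      rw [hz, map_zero] at h'
      exact h'.symm
    set T := LinearMap.range fc with hT
    have hT2 : finrank F T = 2 := by
      rw [hT, LinearMap.finrank_range_of_inj hfcinj, h₁]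
    have hTreg : InRegulus S₁ S₂ S₃ T := by
      refine ⟨hT2, ?_⟩
      intro L hL
      obtain ⟨hLd, hLS₁, hLS₂, hLS₃⟩ := hL
      obtain ⟨a, haL, ha0, haspan⟩ := aux_gen hLS₁
      obtain ⟨b, hbL, hb0, hbspan⟩ := aux_gen hLS₂
      obtain ⟨u, huL, hu0, _⟩ := aux_gen hLS₃
      obtain ⟨a', hu'⟩ := (hφ u).mp huL.2
      have ha'0 : a' ≠ 0 := by
        rintro rfl
        simp only [map_zero, Submodule.coe_zero, add_zero] at hu'
        exact hu0 hu'
      have hφa0 : (↑(φ a') : Fin 4 → F) ≠ 0 := by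
        simp only [ne_eq, ZeroMemClass.coe_eq_zero]
        intro h
        exact ha'0 (φ.injective (by simp [h]))
      -- L = span a ⊔ span b
      have hsub : span F {a} ⊔ span F {b} ≤ L :=
        sup_le (span_le.mpr (by simpa using haL.1)) (span_le.mpr (by simpa using hbL.1))
      have hinfb : span F {a} ⊓ span F {b} = ⊥ := by
        rw [← le_bot_iff, ← h12]
        exact inf_le_inf (span_le.mpr (by simpa using haL.2))
          (span_le.mpr (by simpa using hbL.2))
      have hL_eq : span F {a} ⊔ span F {b} = L := by
        apply Submodule.eq_of_le_of_finrank_le hsub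
        have hh := Submodule.finrank_sup_add_finrank_inf_eq (span F {a}) (span F {b})
        rw [hinfb, finrank_span_singleton ha0, finrank_span_singleton hb0] at hh
        simp only [finrank_bot, add_zero] at hh
        rw [hLd, hh]
      -- representation of u
      have humem : u ∈ span F {a} ⊔ span F {b} := hL_eq ▸ huL.1
      obtain ⟨va, hva, vb, hvb, hvab⟩ := Submodule.mem_sup.mp humem
      obtain ⟨s, hs⟩ := mem_span_singleton.mp hva
      obtain ⟨t, ht⟩ := mem_span_singleton.mp hvb
      rw [← hs, ← ht] at hvab
      -- compute π₁ u, π₂ u two ways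
      have hπu := hππ a' (φ a')
      rw [← hu'] at hπu
      have hπ₁u : π₁ u = a' := by rw [hu']; exact (hππ a' (φ a')).1
      have hπ₂u : π₂ u = φ a' := by rw [hu']; exact (hππ a' (φ a')).2
      have hπ₁u' : π₁ u = s • (⟨a, haL.2⟩ : S₁) := by
        rw [← hvab, map_add, map_smul, map_smul, hπ₁r b hbL.2, smul_zero, add_zero,
          show π₁ a = (⟨a, haL.2⟩ : S₁) from hπ₁l ⟨a, haL.2⟩]
      have hπ₂u' : π₂ u = t • (⟨b, hbL.2⟩ : S₂) := by
        rw [← hvab, map_add, map_smul, map_smul, hπ₂r a haL.2, smul_zero, zero_add,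
          show π₂ b = (⟨b, hbL.2⟩ : S₂) from hπ₂l ⟨b, hbL.2⟩]
      have ha' : a' = s • (⟨a, haL.2⟩ : S₁) := by rw [← hπ₁u, hπ₁u']
      have hφa' : φ a' = t • (⟨b, hbL.2⟩ : S₂) := by rw [← hπ₂u, hπ₂u']
      have hs0 : s ≠ 0 := by rintro rfl; rw [zero_smul] at ha'; exact ha'0 ha'
      have ht0 : t ≠ 0 := by
        rintro rfl
        rw [zero_smul] at hφa'
        apply hφa0
        rw [hφa']
        simp
      -- the intersection point
      set w : Fin 4 → F := ↑a' + c • ↑(φ a') with hw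
      have hwT : w ∈ T := ⟨a', (hfcap a').symm⟩
      have hwL : w ∈ L := by
        apply L.add_mem
        · have : (↑a' : Fin 4 → F) = s • a := by rw [ha']; rfl
          rw [this]; exact L.smul_mem s haL.1
        · have : (↑(φ a') : Fin 4 → F) = t • b := by rw [hφa']; rfl
          rw [this]
          exact L.smul_mem c (L.smul_mem t hbL.1)
      have hw0 : w ≠ 0 := by
        intro h
        have h' : π₁ w = a' := by
          rw [hw, map_add, map_smul,
            show π₁ (↑a' : Fin 4 → F) = a' from hπ₁l a',
            hπ₁r _ (φ a').2, smul_zero, add_zero]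
        rw [h, map_zero] at h'
        exact ha'0 h'.symm
      have hTL : T ⊓ L = span F {w} := by
        apply le_antisymm
        · rintro v ⟨hvT, hvL⟩
          obtain ⟨z, hz⟩ := hvT
          have hvmem : v ∈ span F {a} ⊔ span F {b} := hL_eq ▸ hvL
          obtain ⟨va2, hva2, vb2, hvb2, hvab2⟩ := Submodule.mem_sup.mp hvmem
          obtain ⟨s₂, hs₂⟩ := mem_span_singleton.mp hva2
          obtain ⟨t₂, ht₂⟩ := mem_span_singleton.mp hvb2
          rw [← hs₂, ← ht₂] at hvab2
          have hπ₁v : z = s₂ • (⟨a, haL.2⟩ : S₁) := by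
            rw [← hπ₁fc z, hz, ← hvab2, map_add, map_smul, map_smul, hπ₁r b hbL.2,
              smul_zero, add_zero, show π₁ a = (⟨a, haL.2⟩ : S₁) from hπ₁l ⟨a, haL.2⟩]
          have hz' : z = (s₂ * s⁻¹) • a' := by
            rw [ha', smul_smul, mul_assoc, inv_mul_cancel₀ hs0, mul_one, hπ₁v]
          apply mem_span_singleton.mpr
          refine ⟨s₂ * s⁻¹, ?_⟩
          rw [← hz, hz', map_smul, hfcap a', hw]
        · rw [span_le, Set.singleton_subset_iff]
          exact ⟨hwT, hwL⟩
      rw [hTL, finrank_span_singleton hw0]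
    have hbot := havoid T hTreg
    have hψx : ψ x = c • φ x := by rw [← hφM, hMx, map_smul]
    have hv4 : (↑x + ↑(ψ x) : Fin 4 → F) ∈ S₄ := (hψ _).mpr ⟨x, rfl⟩
    have hvT : (↑x + ↑(ψ x) : Fin 4 → F) ∈ T := by
      refine ⟨x, ?_⟩
      rw [hfcap x, hψx]
      simp
    have hmem : (↑x + ↑(ψ x) : Fin 4 → F) ∈ S₄ ⊓ T := ⟨hv4, hvT⟩
    rw [hbot, Submodule.mem_bot] at hmem
    have h' := (hππ x (ψ x)).1
    rw [hmem, map_zero] at h'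
    exact hx0 h'.symm
  -- independence of x, Mx
  have hindep : ∀ (x : S₁), x ≠ 0 → ∀ a b : F, a • x + b • M x = 0 → a = 0 ∧ b = 0 := by
    intro x hx0 a b hab
    by_cases hb : b = 0
    · subst hb
      rw [zero_smul, add_zero] at hab
      rcases smul_eq_zero.mp hab with h | h
      · exact ⟨h, rfl⟩
      · exact absurd h hx0
    · exfalso
      apply hx0
      apply heig x (-(b⁻¹ * a))
      have : b • M x = -(a • x) := by
        rw [eq_neg_iff_add_eq_zero, add_comm]
        exact hab
      have h2 : M x = b⁻¹ • (b • M x) := by rw [smul_smul, inv_mul_cancel₀ hb, one_smul]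
      rw [h2, this]
      module
  -- x, Mx span S₁
  have hspan : ∀ (x : S₁), x ≠ 0 → ∀ y : S₁, ∃ a b : F, a • x + b • M x = y := by
    intro x hx0 y
    have hli : LinearIndependent F ![x, M x] := by
      rw [LinearIndependent.pair_iff]
      exact fun s t h => hindep x hx0 s t h
    have hsp : span F {x, M x} = ⊤ := by
      apply Submodule.eq_top_of_finrank_eq
      have := finrank_span_eq_card hli
      rw [show Set.range ![x, M x] = {x, M x} by
        simp [Matrix.range_cons, Matrix.range_empty]; exact Set.pair_comm _ _] at this
      rw [this, h₁]
      rfl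
    have : y ∈ span F {x, M x} := by rw [hsp]; trivial
    exact Submodule.mem_span_pair.mp this
  -- structure of hyperplanes through S₄
  have hHstruct : ∀ K : Submodule F (Fin 4 → F), finrank F K = 3 → S₄ ≤ K →
      ∃ x : Fin 4 → F, x ∈ K ∧ x ∈ S₁ ∧ x ≠ 0 ∧ K ⊓ S₁ = span F {x} ∧
        K = S₄ ⊔ span F {x} := by
    intro K hK3 hS4K
    have h14top : S₁ ⊔ S₄ = ⊤ := by
      apply Submodule.eq_top_of_finrank_eq
      rw [hV4]
      have := Submodule.finrank_sup_add_finrank_inf_eq S₁ S₄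
      rw [h14, h₁, h₄] at this
      simpa using this
    have hKtop : K ⊔ S₁ = ⊤ := by
      rw [← top_le_iff, ← h14top]
      exact sup_le (le_sup_right) (le_trans hS4K le_sup_left)
    have hKS₁ : finrank F ↥(K ⊓ S₁) = 1 := by
      have := Submodule.finrank_sup_add_finrank_inf_eq K S₁
      rw [hKtop, hK3, h₁, finrank_top, hV4] at this
      omega
    obtain ⟨x, hxK, hx0, hxspan⟩ := aux_gen hKS₁
    refine ⟨x, hxK.1, hxK.2, hx0, hxspan, ?_⟩
    have hle : S₄ ⊔ span F {x} ≤ K :=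
      sup_le hS4K (span_le.mpr (by simpa using hxK.1))
    have hinf : S₄ ⊓ span F {x} = ⊥ := by
      rw [← le_bot_iff, ← h14, inf_comm S₁ S₄]
      exact inf_le_inf le_rfl (span_le.mpr (by simpa using hxK.2))
    symm
    apply Submodule.eq_of_le_of_finrank_le hle
    have := Submodule.finrank_sup_add_finrank_inf_eq S₄ (span F {x})
    rw [hinf, h₄, finrank_span_singleton hx0] at this
    simp only [finrank_bot, add_zero] at this
    rw [hK3, this]
  -- generators for H and H'
  obtain ⟨x, hxH, hxS₁, hx0, hxinf, hxsup⟩ := hHstruct H hH3 hS4H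
  obtain ⟨x', hxH', hxS₁', hx0', hxinf', hxsup'⟩ := hHstruct H' hH'3 hS4H'
  have hxs0 : (⟨x, hxS₁⟩ : S₁) ≠ 0 := fun h => hx0 (by simpa [Subtype.ext_iff] using h)
  have hxs0' : (⟨x', hxS₁'⟩ : S₁) ≠ 0 := fun h => hx0' (by simpa [Subtype.ext_iff] using h)
  -- existence
  have hex : ∃ g : (Fin 4 → F) ≃ₗ[F] (Fin 4 → F),
      (S₁.map (g : (Fin 4 → F) →ₗ[F] (Fin 4 → F)) = S₁ ∧
       S₂.map (g : (Fin 4 → F) →ₗ[F] (Fin 4 → F)) = S₂ ∧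
       S₃.map (g : (Fin 4 → F) →ₗ[F] (Fin 4 → F)) = S₃ ∧
       S₄.map (g : (Fin 4 → F) →ₗ[F] (Fin 4 → F)) = S₄) ∧
      H.map (g : (Fin 4 → F) →ₗ[F] (Fin 4 → F)) = H' := by
    obtain ⟨a, b, hab⟩ := hspan ⟨x, hxS₁⟩ hxs0 ⟨x', hxS₁'⟩
    set A₀ : S₁ →ₗ[F] S₁ := a • LinearMap.id + b • (M : S₁ →ₗ[F] S₁) with hA₀
    have hA₀ap : ∀ z, A₀ z = a • z + b • M z := by intro z; simp [hA₀]
    have hA₀inj : Function.Injective A₀ := by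
      rw [← LinearMap.ker_eq_bot, LinearMap.ker_eq_bot']
      intro z hz
      by_contra hz0
      obtain ⟨ha0, hb0⟩ := hindep z hz0 a b (by rw [← hA₀ap]; exact hz)
      apply hxs0'
      rw [← hab, ha0, hb0, zero_smul, zero_smul, add_zero]
    have hA₀surj := (LinearMap.injective_iff_surjective_of_finrank_eq_finrank rfl).mp hA₀inj
    set A : S₁ ≃ₗ[F] S₁ := LinearEquiv.ofBijective A₀ ⟨hA₀inj, hA₀surj⟩ with hA
    have hAap : ∀ z, A z = a • z + b • M z := fun z => hA₀ap z
    have hAM : ∀ z, A (M z) = M (A z) := by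
      intro z
      rw [hAap, hAap, map_add, map_smul, map_smul]
    set B : S₂ ≃ₗ[F] S₂ := (φ.symm.trans A).trans φ with hB
    have hBap : ∀ y, B y = φ (A (φ.symm y)) := fun y => rfl
    obtain ⟨g, hgap⟩ : ∃ g : (Fin 4 → F) ≃ₗ[F] (Fin 4 → F),
        ∀ v, g v = ↑(A (π₁ v)) + ↑(B (π₂ v)) := by
      refine ⟨LinearEquiv.ofLinear
        (S₁.subtype ∘ₗ (A : S₁ →ₗ[F] S₁) ∘ₗ π₁ + S₂.subtype ∘ₗ (B : S₂ →ₗ[F] S₂) ∘ₗ π₂)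
        (S₁.subtype ∘ₗ (A.symm : S₁ →ₗ[F] S₁) ∘ₗ π₁ +
          S₂.subtype ∘ₗ (B.symm : S₂ →ₗ[F] S₂) ∘ₗ π₂)
        ?_ ?_, fun v => rfl⟩
      · apply LinearMap.ext
        intro v
        simp only [LinearMap.comp_apply, LinearMap.add_apply, Submodule.coe_subtype,
          LinearMap.id_apply, LinearEquiv.coe_coe]
        rw [show π₁ (↑(A.symm (π₁ v)) + ↑(B.symm (π₂ v))) = A.symm (π₁ v) from (hππ _ _).1,
          show π₂ (↑(A.symm (π₁ v)) + ↑(B.symm (π₂ v))) = B.symm (π₂ v) from (hππ _ _).2,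
          A.apply_symm_apply, B.apply_symm_apply, hdec]
      · apply LinearMap.ext
        intro v
        simp only [LinearMap.comp_apply, LinearMap.add_apply, Submodule.coe_subtype,
          LinearMap.id_apply, LinearEquiv.coe_coe]
        rw [show π₁ (↑(A (π₁ v)) + ↑(B (π₂ v))) = A (π₁ v) from (hππ _ _).1,
          show π₂ (↑(A (π₁ v)) + ↑(B (π₂ v))) = B (π₂ v) from (hππ _ _).2,
          A.symm_apply_apply, B.symm_apply_apply, hdec]
    have hmap₁ : S₁.map (g : (Fin 4 → F) →ₗ[F] (Fin 4 → F)) = S₁ := by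
      apply aux_mapeq
      rintro _ ⟨v, hv, rfl⟩
      show g v ∈ S₁
      rw [hgap, hπ₂r v hv, map_zero, Submodule.coe_zero, add_zero]
      exact (A (π₁ v)).2
    have hmap₂ : S₂.map (g : (Fin 4 → F) →ₗ[F] (Fin 4 → F)) = S₂ := by
      apply aux_mapeq
      rintro _ ⟨v, hv, rfl⟩
      show g v ∈ S₂
      rw [hgap, hπ₁r v hv, map_zero, Submodule.coe_zero, zero_add]
      exact (B (π₂ v)).2
    have hmap₃ : S₃.map (g : (Fin 4 → F) →ₗ[F] (Fin 4 → F)) = S₃ := by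
      apply aux_mapeq
      rintro _ ⟨v, hv, rfl⟩
      obtain ⟨z, rfl⟩ := (hφ v).mp hv
      show g _ ∈ S₃
      rw [hgap, (hππ z (φ z)).1, (hππ z (φ z)).2,
        show B (φ z) = φ (A z) by rw [hBap, φ.symm_apply_apply]]
      exact (hφ _).mpr ⟨A z, rfl⟩
    have hmap₄ : S₄.map (g : (Fin 4 → F) →ₗ[F] (Fin 4 → F)) = S₄ := by
      apply aux_mapeq
      rintro _ ⟨v, hv, rfl⟩
      obtain ⟨z, rfl⟩ := (hψ v).mp hv
      show g _ ∈ S₄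
      have hMz : φ.symm (ψ z) = M z := by rw [← hφM z, φ.symm_apply_apply]
      rw [hgap, (hππ z (ψ z)).1, (hππ z (ψ z)).2,
        show B (ψ z) = ψ (A z) by rw [hBap, hMz, hAM, hφM]]
      exact (hψ _).mpr ⟨A z, rfl⟩
    refine ⟨g, ⟨hmap₁, hmap₂, hmap₃, hmap₄⟩, ?_⟩
    rw [hxsup, Submodule.map_sup, hmap₄, Submodule.map_span, Set.image_singleton]
    have hgx : (g : (Fin 4 → F) →ₗ[F] (Fin 4 → F)) x = x' := by
      show g x = x'
      rw [hgap, (hπ₁l ⟨x, hxS₁⟩ : π₁ x = ⟨x, hxS₁⟩), (hπ₂r x hxS₁ : π₂ x = 0), map_zero,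
        Submodule.coe_zero, add_zero,
        show A ⟨x, hxS₁⟩ = ⟨x', hxS₁'⟩ by rw [hAap]; exact hab]
    rw [hgx, ← hxsup']
  -- uniqueness: canonical form of any stabilizing equivalence
  have key : ∀ k : (Fin 4 → F) ≃ₗ[F] (Fin 4 → F),
      (S₁.map (k : (Fin 4 → F) →ₗ[F] (Fin 4 → F)) = S₁ ∧
       S₂.map (k : (Fin 4 → F) →ₗ[F] (Fin 4 → F)) = S₂ ∧
       S₃.map (k : (Fin 4 → F) →ₗ[F] (Fin 4 → F)) = S₃ ∧
       S₄.map (k : (Fin 4 → F) →ₗ[F] (Fin 4 → F)) = S₄) →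
      H.map (k : (Fin 4 → F) →ₗ[F] (Fin 4 → F)) = H' →
      ∃ aa bb cc : F, cc ≠ 0 ∧
        aa • (⟨x, hxS₁⟩ : S₁) + bb • M ⟨x, hxS₁⟩ = cc • (⟨x', hxS₁'⟩ : S₁) ∧
        ∀ v, k v = aa • v + bb • (↑(M (π₁ v)) + ↑(ψ (φ.symm (π₂ v)))) := by
    rintro k ⟨hk1, hk2, hk3, hk4⟩ hkH
    have hkm₁ : ∀ v, v ∈ S₁ → k v ∈ S₁ := fun v hv => by
      rw [← hk1]; exact ⟨v, hv, rfl⟩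
    have hkm₂ : ∀ v, v ∈ S₂ → k v ∈ S₂ := fun v hv => by
      rw [← hk2]; exact ⟨v, hv, rfl⟩
    obtain ⟨κ, hκ⟩ : ∃ κ : S₁ → S₁, ∀ z : S₁, (↑(κ z) : Fin 4 → F) = k ↑z :=
      ⟨fun z => ⟨k ↑z, hkm₁ _ z.2⟩, fun z => rfl⟩
    have hκadd : ∀ y z, κ (y + z) = κ y + κ z := by
      intro y z
      apply Subtype.ext
      simp only [Submodule.coe_add, hκ, map_add]
    have hκsmul : ∀ (c : F) (z : S₁), κ (c • z) = c • κ z := by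
      intro c z
      apply Subtype.ext
      simp only [Submodule.coe_smul, hκ, map_smul]
    have hκφ : ∀ z : S₁, k ↑(φ z) = ↑(φ (κ z)) := by
      intro z
      have hv : (↑z + ↑(φ z) : Fin 4 → F) ∈ S₃ := (hφ _).mpr ⟨z, rfl⟩
      have hkv : k (↑z + ↑(φ z)) ∈ S₃ := by rw [← hk3]; exact ⟨_, hv, rfl⟩
      obtain ⟨w, hw⟩ := (hφ _).mp hkv
      rw [map_add] at hw
      have huw : π₁ (k ↑z + k ↑(φ z)) = w := by rw [hw]; exact (hππ w (φ w)).1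
      have hup : π₁ (k ↑z + k ↑(φ z)) = ⟨k ↑z, hkm₁ _ z.2⟩ :=
        (hππ ⟨k ↑z, hkm₁ _ z.2⟩ ⟨k ↑(φ z), hkm₂ _ (φ z).2⟩).1
      have hwκ : w = κ z := by
        rw [← huw, hup]
        exact (Subtype.ext (hκ z)).symm
      rw [hwκ, hκ] at hw
      exact add_left_cancel hw
    have hκψ : ∀ z : S₁, k ↑(ψ z) = ↑(ψ (κ z)) := by
      intro z
      have hv : (↑z + ↑(ψ z) : Fin 4 → F) ∈ S₄ := (hψ _).mpr ⟨z, rfl⟩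
      have hkv : k (↑z + ↑(ψ z)) ∈ S₄ := by rw [← hk4]; exact ⟨_, hv, rfl⟩
      obtain ⟨w, hw⟩ := (hψ _).mp hkv
      rw [map_add] at hw
      have huw : π₁ (k ↑z + k ↑(ψ z)) = w := by rw [hw]; exact (hππ w (ψ w)).1
      have hup : π₁ (k ↑z + k ↑(ψ z)) = ⟨k ↑z, hkm₁ _ z.2⟩ :=
        (hππ ⟨k ↑z, hkm₁ _ z.2⟩ ⟨k ↑(ψ z), hkm₂ _ (ψ z).2⟩).1
      have hwκ : w = κ z := by
        rw [← huw, hup]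
        exact (Subtype.ext (hκ z)).symm
      rw [hwκ, hκ] at hw
      exact add_left_cancel hw
    have hκM : ∀ z, κ (M z) = M (κ z) := by
      intro z
      apply φ.injective
      apply Subtype.ext
      show (↑(φ (κ (M z))) : Fin 4 → F) = ↑(φ (M (κ z)))
      rw [← hκφ (M z), hφM z, hκψ z, ← hφM (κ z)]
    obtain ⟨a, b, hab⟩ := hspan ⟨x, hxS₁⟩ hxs0 (κ ⟨x, hxS₁⟩)
    have hκall : ∀ z, κ z = a • z + b • M z := by
      intro z
      obtain ⟨s, t, hst⟩ := hspan ⟨x, hxS₁⟩ hxs0 z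
      have h1 : κ z = s • κ ⟨x, hxS₁⟩ + t • κ (M ⟨x, hxS₁⟩) := by
        rw [← hκsmul, ← hκsmul, ← hκadd, hst]
      rw [h1, hκM, ← hab, ← hst, map_add, map_smul, map_smul, map_add, map_smul, map_smul]
      module
    -- the scalar for H
    have hkx : k x ∈ H' := by rw [← hkH]; exact ⟨x, hxH, rfl⟩
    have hkxmem : k x ∈ span F {x'} := by rw [← hxinf']; exact ⟨hkx, hkm₁ x hxS₁⟩
    obtain ⟨c, hc⟩ := mem_span_singleton.mp hkxmem
    have hc0 : c ≠ 0 := by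
      rintro rfl
      rw [zero_smul] at hc
      exact hx0 (k.injective (by rw [← hc, map_zero]))
    refine ⟨a, b, c, hc0, ?_, ?_⟩
    · rw [hab]
      apply Subtype.ext
      rw [hκ, Submodule.coe_smul]
      exact hc.symm
    · have e1 : ∀ p : S₁, k ↑p = a • ↑p + b • ↑(M p) := by
        intro p
        rw [← hκ, hκall, Submodule.coe_add, Submodule.coe_smul, Submodule.coe_smul]
      have e2 : ∀ q : S₂, k ↑q = a • ↑q + b • ↑(ψ (φ.symm q)) := by
        intro q
        have h3 : (↑q : Fin 4 → F) = ↑(φ (φ.symm q)) := by rw [φ.apply_symm_apply]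
        rw [h3, hκφ, hκall, map_add, map_smul, map_smul, hφM, Submodule.coe_add,
          Submodule.coe_smul, Submodule.coe_smul, φ.apply_symm_apply]
      intro v
      obtain ⟨p, q, hpq, hp1, hp2⟩ :
          ∃ (p : S₁) (q : S₂), v = ↑p + ↑q ∧ π₁ v = p ∧ π₂ v = q :=
        ⟨π₁ v, π₂ v, (hdec v).symm, rfl, rfl⟩
      rw [hp1, hp2, hpq, map_add, e1 p, e2 q]
      module
  -- conclude uniqueness
  have huniq : ∀ g g' : (Fin 4 → F) ≃ₗ[F] (Fin 4 → F),
      (S₁.map (g : (Fin 4 → F) →ₗ[F] (Fin 4 → F)) = S₁ ∧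
       S₂.map (g : (Fin 4 → F) →ₗ[F] (Fin 4 → F)) = S₂ ∧
       S₃.map (g : (Fin 4 → F) →ₗ[F] (Fin 4 → F)) = S₃ ∧
       S₄.map (g : (Fin 4 → F) →ₗ[F] (Fin 4 → F)) = S₄) →
      H.map (g : (Fin 4 → F) →ₗ[F] (Fin 4 → F)) = H' →
      (S₁.map (g' : (Fin 4 → F) →ₗ[F] (Fin 4 → F)) = S₁ ∧
       S₂.map (g' : (Fin 4 → F) →ₗ[F] (Fin 4 → F)) = S₂ ∧
       S₃.map (g' : (Fin 4 → F) →ₗ[F] (Fin 4 → F)) = S₃ ∧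
       S₄.map (g' : (Fin 4 → F) →ₗ[F] (Fin 4 → F)) = S₄) →
      H.map (g' : (Fin 4 → F) →ₗ[F] (Fin 4 → F)) = H' →
      ∃ c : Fˣ, ∀ v, g' v = (c : F) • g v := by
    intro g g' hgstab hgH hg'stab hg'H
    obtain ⟨a, b, c₁, hc₁0, habc, hgform⟩ := key g hgstab hgH
    obtain ⟨a', b', c₂, hc₂0, habc', hg'form⟩ := key g' hg'stab hg'H
    have hzero : (c₂ * a - c₁ * a') • (⟨x, hxS₁⟩ : S₁) +
        (c₂ * b - c₁ * b') • M ⟨x, hxS₁⟩ = 0 := by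
      have h1 : c₂ • (a • (⟨x, hxS₁⟩ : S₁) + b • M ⟨x, hxS₁⟩) -
          c₁ • (a' • (⟨x, hxS₁⟩ : S₁) + b' • M ⟨x, hxS₁⟩) = 0 := by
        rw [habc, habc', smul_smul, smul_smul, mul_comm c₂ c₁, sub_self]
      refine Eq.trans ?_ h1
      module
    obtain ⟨hA, hB⟩ := hindep ⟨x, hxS₁⟩ hxs0 _ _ hzero
    have hA' : c₂ * a = c₁ * a' := by linear_combination hA
    have hB' : c₂ * b = c₁ * b' := by linear_combination hB
    refine ⟨Units.mk0 (c₁⁻¹ * c₂) (mul_ne_zero (inv_ne_zero hc₁0) hc₂0), ?_⟩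
    intro v
    show g' v = (c₁⁻¹ * c₂) • g v
    have h1 : c₁ • g' v = c₂ • g v := by
      rw [hgform v, hg'form v]
      match_scalars
      · linear_combination -hA'
      · linear_combination -hB'
      · linear_combination -hB'
    calc g' v = c₁⁻¹ • (c₁ • g' v) := by rw [smul_smul, inv_mul_cancel₀ hc₁0, one_smul]
      _ = c₁⁻¹ • (c₂ • g v) := by rw [h1]
      _ = (c₁⁻¹ * c₂) • g v := by rw [smul_smul]
  exact ⟨hex, huniq⟩
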